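/- Under the hypotheses of the complete intersection theorem (four distinct A_i ∈ ℙ^1∖(Δ_0∪W)), the ab lines P_i^A ⋆ Q_j^A ⋆ L^A, for i ∈ I(a) and j ∈ I(b), are pairwise distinct lines of ℙ^3. -/
import Mathlib


/-- The point P_i^A ⋆ Q_j^A ∈ ℙ³ (affine representative). -/
noncomputable def PQvec (α β : Fin 4 → ℂ) (i j : ℕ) : Fin 4 → ℂ :=
  fun t => ((α t + (i : ℂ) * β t) * ((j : ℂ) * α t + β t)) / (α t * β t)

/-- The cone over the line L^A: solutions of Σ α_t x_t = 0 = Σ β_t x_t. -/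
def LAset (α β : Fin 4 → ℂ) : Set (Fin 4 → ℂ) :=
  {x | (∑ t, α t * x t) = 0 ∧ (∑ t, β t * x t) = 0}

/-- The line P_i^A ⋆ Q_j^A ⋆ L^A, as a subset of ℙ³. -/
def lineIJ (α β : Fin 4 → ℂ) (i j : ℕ) : Set (Projectivization ℂ (Fin 4 → ℂ)) :=
  {z | ∃ x ∈ LAset α β, ∃ h : (fun t => PQvec α β i j t * x t) ≠ 0,
    z = Projectivization.mk ℂ (fun t => PQvec α β i j t * x t) h}

lemma PQvec_ne_zero (α β : Fin 4 → ℂ) (hα : ∀ t, α t ≠ 0) (hβ : ∀ t, β t ≠ 0)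
    (hW : ∀ t, ∀ m : ℕ, 1 ≤ m → β t ≠ -(m : ℂ) * α t ∧ (m : ℂ) * β t ≠ -α t)
    (i j : ℕ) (t : Fin 4) : PQvec α β i j t ≠ 0 := by
  unfold PQvec
  apply div_ne_zero
  · apply mul_ne_zero
    · rcases Nat.eq_zero_or_pos i with h | h
      · subst h; simpa using hα t
      · intro hz
        exact (hW t i h).2 (by linear_combination hz)
    · rcases Nat.eq_zero_or_pos j with h | h
      · subst h; simpa using hβ t
      · intro hz
        exact (hW t j h).1 (by linear_combination hz)
  · exact mul_ne_zero (hα t) (hβ t)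

/-- the a·b lines P_i^A ⋆ Q_j^A ⋆ L^A, i ∈ I(a), j ∈ I(b), are
pairwise distinct lines of ℙ³. -/
theorem lines_pairwise_distinct (α β : Fin 4 → ℂ)
    (hα : ∀ t, α t ≠ 0) (hβ : ∀ t, β t ≠ 0)
    (hdist : ∀ t s : Fin 4, t ≠ s → α t * β s ≠ α s * β t)
    (hW : ∀ t, ∀ m : ℕ, 1 ≤ m → β t ≠ -(m : ℂ) * α t ∧ (m : ℂ) * β t ≠ -α t)
    (a b : ℕ) (Ia Ib : Finset ℕ) (hIa : Ia.card = a) (hIb : Ib.card = b)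
    (h0a : 0 ∈ Ia) (h0b : 0 ∈ Ib) :
    ∀ i ∈ Ia, ∀ k ∈ Ia, ∀ j ∈ Ib, ∀ l ∈ Ib, (i, j) ≠ (k, l) →
      lineIJ α β i j ≠ lineIJ α β k l := by
  intro i hi k hk j hj l hl hne heq
  clear hIa hIb h0a h0b hi hk hj hl
  set c := PQvec α β i j with hc_def
  set d := PQvec α β k l with hd_def
  have hc : ∀ t, c t ≠ 0 := PQvec_ne_zero α β hα hβ hW i j
  have hd : ∀ t, d t ≠ 0 := PQvec_ne_zero α β hα hβ hW k l
  set M : Fin 4 → Fin 4 → ℂ := fun t s => α t * β s - α s * β t with hM_def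
  have hM : ∀ t s : Fin 4, t ≠ s → M t s ≠ 0 := fun t s h => sub_ne_zero.mpr (hdist t s h)
  set e : Fin 4 → ℂ := fun t => c t / d t with he_def
  -- transfer lemma: Hadamard multiplication by e preserves the cone over L^A
  have key : ∀ x : Fin 4 → ℂ, x ∈ LAset α β → x ≠ 0 →
      (fun t => e t * x t) ∈ LAset α β := by
    intro x hx hx0
    have hcx : (fun t => c t * x t) ≠ 0 := by
      obtain ⟨t, ht⟩ := Function.ne_iff.mp hx0
      exact Function.ne_iff.mpr ⟨t, mul_ne_zero (hc t) ht⟩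
    have hmem : Projectivization.mk ℂ (fun t => c t * x t) hcx ∈ lineIJ α β i j :=
      ⟨x, hx, hcx, rfl⟩
    rw [heq] at hmem
    obtain ⟨y, hy, hdy, hmk⟩ := hmem
    rw [Projectivization.mk_eq_mk_iff] at hmk
    obtain ⟨u, hu⟩ := hmk
    have hxy : ∀ t, e t * x t = (u : ℂ) * y t := by
      intro t
      have h := congrFun hu t
      simp only [Units.smul_def, Pi.smul_apply, smul_eq_mul] at h
      rw [← hd_def] at h
      rw [he_def]
      field_simp [hd t]
      linear_combination -h
    obtain ⟨hy1, hy2⟩ := hy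
    constructor
    · calc (∑ t, α t * (e t * x t)) = ∑ t, (u : ℂ) * (α t * y t) := by
            refine Finset.sum_congr rfl fun t _ => ?_
            rw [hxy t]; ring
        _ = (u : ℂ) * ∑ t, α t * y t := by rw [Finset.mul_sum]
        _ = 0 := by rw [hy1, mul_zero]
    · calc (∑ t, β t * (e t * x t)) = ∑ t, (u : ℂ) * (β t * y t) := by
            refine Finset.sum_congr rfl fun t _ => ?_
            rw [hxy t]; ring
        _ = (u : ℂ) * ∑ t, β t * y t := by rw [Finset.mul_sum]
        _ = 0 := by rw [hy2, mul_zero]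
  -- two explicit points on L^A
  set v : Fin 4 → ℂ := ![M 1 2, -(M 0 2), M 0 1, 0] with hv_def
  have hv_mem : v ∈ LAset α β := by
    constructor <;>
      · show (∑ t, _ * v t) = 0
        rw [Fin.sum_univ_four]
        simp only [hv_def, hM_def, Matrix.cons_val_zero, Matrix.cons_val_one, Matrix.head_cons,
          Matrix.cons_val_two, Matrix.tail_cons, Matrix.cons_val_three]
        ring
  have hv0 : v ≠ 0 := by
    refine Function.ne_iff.mpr ⟨0, ?_⟩
    simpa [hv_def] using hM 1 2 (by decide)
  set w : Fin 4 → ℂ := ![0, M 2 3, -(M 1 3), M 1 2] with hw_def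
  have hw_mem : w ∈ LAset α β := by
    constructor <;>
      · show (∑ t, _ * w t) = 0
        rw [Fin.sum_univ_four]
        simp only [hw_def, hM_def, Matrix.cons_val_zero, Matrix.cons_val_one, Matrix.head_cons,
          Matrix.cons_val_two, Matrix.tail_cons, Matrix.cons_val_three]
        ring
  have hw0 : w ≠ 0 := by
    refine Function.ne_iff.mpr ⟨3, ?_⟩
    simpa [hw_def] using hM 1 2 (by decide)
  obtain ⟨E1, E2⟩ := key v hv_mem hv0
  obtain ⟨E3, E4⟩ := key w hw_mem hw0
  rw [Fin.sum_univ_four] at E1 E2 E3 E4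
  simp only [hv_def, hw_def, Matrix.cons_val_zero, Matrix.cons_val_one, Matrix.head_cons,
    Matrix.cons_val_two, Matrix.tail_cons, Matrix.cons_val_three] at E1 E2 E3 E4
  -- all coordinates of e agree
  have h01 : e 0 = e 1 := by
    have h : M 0 2 * M 1 2 * (e 0 - e 1) = 0 := by
      rw [hM_def]; linear_combination (β 2) * E1 - (α 2) * E2
    have hz := (mul_eq_zero.mp h).resolve_left
      (mul_ne_zero (hM 0 2 (by decide)) (hM 1 2 (by decide)))
    exact sub_eq_zero.mp hz
  have h02 : e 0 = e 2 := by
    have h : M 0 1 * M 1 2 * (e 0 - e 2) = 0 := by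
      rw [hM_def]; linear_combination (β 1) * E1 - (α 1) * E2
    exact sub_eq_zero.mp ((mul_eq_zero.mp h).resolve_left
      (mul_ne_zero (hM 0 1 (by decide)) (hM 1 2 (by decide))))
  have h13 : e 1 = e 3 := by
    have h : M 1 2 * M 2 3 * (e 1 - e 3) = 0 := by
      rw [hM_def]; linear_combination (β 2) * E3 - (α 2) * E4
    exact sub_eq_zero.mp ((mul_eq_zero.mp h).resolve_left
      (mul_ne_zero (hM 1 2 (by decide)) (hM 2 3 (by decide))))
  set p := e 0 with hp_def
  have het : ∀ t, e t = p := by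
    intro t
    fin_cases t
    · rfl
    · exact h01.symm
    · exact h02.symm
    · exact h13.symm.trans h01.symm
  have F : ∀ t, (α t + (i : ℂ) * β t) * ((j : ℂ) * α t + β t)
      = p * ((α t + (k : ℂ) * β t) * ((l : ℂ) * α t + β t)) := by
    intro t
    have h : c t = p * d t := by
      rw [← het t, he_def]
      exact (div_mul_cancel₀ (c t) (hd t)).symm
    have h3 : PQvec α β i j t = p * PQvec α β k l t := h
    unfold PQvec at h3
    field_simp [hα t, hβ t] at h3
    linear_combination h3
  have G : ∀ t, ((j : ℂ) - p * l) * (α t) ^ 2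
      + ((1 + (i : ℂ) * j) - p * (1 + (k : ℂ) * l)) * (α t * β t)
      + ((i : ℂ) - p * k) * (β t) ^ 2 = 0 := by
    intro t
    linear_combination F t
  have hprod : M 0 1 * M 0 2 * M 1 2 ≠ 0 :=
    mul_ne_zero (mul_ne_zero (hM 0 1 (by decide)) (hM 0 2 (by decide))) (hM 1 2 (by decide))
  have hC0 : (i : ℂ) - p * k = 0 := by
    have h : ((i : ℂ) - p * k) * (M 0 1 * M 0 2 * M 1 2) = 0 := by
      rw [hM_def]
      linear_combination (α 1 * α 2 * (α 1 * β 2 - α 2 * β 1)) * G 0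
        - (α 0 * α 2 * (α 0 * β 2 - α 2 * β 0)) * G 1
        + (α 0 * α 1 * (α 0 * β 1 - α 1 * β 0)) * G 2
    exact (mul_eq_zero.mp h).resolve_right hprod
  have hA0 : (j : ℂ) - p * l = 0 := by
    have h : ((j : ℂ) - p * l) * (M 0 1 * M 0 2 * M 1 2) = 0 := by
      rw [hM_def]
      linear_combination (β 1 * β 2 * (α 1 * β 2 - α 2 * β 1)) * G 0
        - (β 0 * β 2 * (α 0 * β 2 - α 2 * β 0)) * G 1
        + (β 0 * β 1 * (α 0 * β 1 - α 1 * β 0)) * G 2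
    exact (mul_eq_zero.mp h).resolve_right hprod
  have hB0 : (1 + (i : ℂ) * j) - p * (1 + (k : ℂ) * l) = 0 := by
    have h : ((1 + (i : ℂ) * j) - p * (1 + (k : ℂ) * l)) * (α 0 * β 0) = 0 := by
      linear_combination G 0 - (α 0) ^ 2 * hA0 - (β 0) ^ 2 * hC0
    exact (mul_eq_zero.mp h).resolve_right (mul_ne_zero (hα 0) (hβ 0))
  have D1 : (k : ℂ) - i = (i : ℂ) * k * ((l : ℂ) - j) := by
    linear_combination (k : ℂ) * hB0 - (1 + (k : ℂ) * l) * hC0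
  have D2 : (l : ℂ) - j = (j : ℂ) * l * ((k : ℂ) - i) := by
    linear_combination (l : ℂ) * hB0 - (1 + (k : ℂ) * l) * hA0
  have D3 : ((k : ℂ) - i) * (1 - (i : ℂ) * j * k * l) = 0 := by
    linear_combination D1 + (i : ℂ) * (k : ℂ) * D2
  rcases mul_eq_zero.mp D3 with h | h
  · have hik : i = k := by
      have : (i : ℂ) = (k : ℂ) := (sub_eq_zero.mp h).symm
      exact_mod_cast this
    have hjl : j = l := by
      have h2 : (l : ℂ) - j = 0 := by rw [D2, h, mul_zero]
      have : (j : ℂ) = (l : ℂ) := (sub_eq_zero.mp h2).symm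
      exact_mod_cast this
    exact hne (by rw [hik, hjl])
  · have h1 : ((i * j * k * l : ℕ) : ℂ) = 1 := by push_cast; linear_combination -h
    have h2 : i * j * k * l = 1 := by exact_mod_cast h1
    have hi1 : i = 1 ∧ j = 1 ∧ k = 1 ∧ l = 1 := by
      have hl1 := Nat.eq_one_of_mul_eq_one_left h2
      have h3 := Nat.eq_one_of_mul_eq_one_right h2
      have hk1 := Nat.eq_one_of_mul_eq_one_left h3
      have h4 := Nat.eq_one_of_mul_eq_one_right h3
      exact ⟨Nat.eq_one_of_mul_eq_one_right h4, Nat.eq_one_of_mul_eq_one_left h4, hk1, hl1⟩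
    obtain ⟨hi1, hj1, hk1, hl1⟩ := hi1
    exact hne (by rw [hi1, hj1, hk1, hl1])
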